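/- Let R = GR(4, 4^r), ξ ∈ R of multiplicative order 2^r − 1, G₁ = ⟨ξ⟩, and T : R → Z/4Z the trace map T(x) = x + φ(x) + ... + φ^{r−1}(x) relative to the Frobenius φ. Let ω = i be a primitive 4th root of unity and for γ ∈ R set ζ_γ = Σ_{s∈G₁} ω^{T(γs)}. Then for every unit γ ∈ R^*, |1 + ζ_γ|² = 2^r; in particular 2^{r/2} − 1 ≤ |ζ_γ| ≤ 2^{r/2} + 1. -/

import Mathlib

lemma aux_zmod4_cases (t : ZMod 4) : t = 0 ∨ t = 1 ∨ t = 2 ∨ t = 3 := by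
  revert t; decide

open Complex in
lemma aux_I_pow_mod (n : ℕ) : I ^ n = I ^ (n % 4) := by
  conv_lhs => rw [← Nat.div_add_mod n 4]
  rw [pow_add, pow_mul, Complex.I_pow_four, one_pow, one_mul]

open Complex in
lemma aux_I_val_add (s t : ZMod 4) : I ^ ((s + t).val) = I ^ s.val * I ^ t.val := by
  rw [ZMod.val_add, ← aux_I_pow_mod, pow_add]

lemma aux_I_ne_one : Complex.I ≠ 1 := by
  intro h; have := congrArg Complex.im h; simp at this

open Complex in
lemma aux_I_val_eq_one (t : ZMod 4) : I ^ t.val = 1 ↔ t = 0 := by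
  rcases aux_zmod4_cases t with rfl | rfl | rfl | rfl
  · simp [show (0 : ZMod 4).val = 0 from rfl]
  · rw [show (1 : ZMod 4).val = 1 from rfl]
    simp only [pow_one, (by decide : (1 : ZMod 4) ≠ 0), iff_false]
    exact aux_I_ne_one
  · rw [show (2 : ZMod 4).val = 2 from rfl]
    simp only [(by decide : (2 : ZMod 4) ≠ 0), iff_false, sq, Complex.I_mul_I]
    intro h; have := congrArg Complex.re h; norm_num at this
  · rw [show (3 : ZMod 4).val = 3 from rfl]
    simp only [(by decide : (3 : ZMod 4) ≠ 0), iff_false, pow_succ, sq, Complex.I_mul_I]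
    intro h
    have h2 : Complex.I = -1 := by linear_combination -h + Complex.I * Complex.I_mul_I
    have := congrArg Complex.im h2; simp at this

open Complex in
lemma aux_I_conj (t : ZMod 4) :
    (starRingEnd ℂ) (I ^ t.val) = I ^ ((-t).val) := by
  rw [map_pow, Complex.conj_I]
  rcases aux_zmod4_cases t with rfl | rfl | rfl | rfl <;>
    norm_num [show (0 : ZMod 4).val = 0 from rfl, show (1 : ZMod 4).val = 1 from rfl,
      show (2 : ZMod 4).val = 2 from rfl, show (3 : ZMod 4).val = 3 from rfl,
      show ((-1 : ZMod 4)).val = 3 from rfl, show ((-2 : ZMod 4)).val = 2 from rfl,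
      show ((-3 : ZMod 4)).val = 1 from rfl, pow_succ, Complex.I_mul_I]

lemma aux_char_sum {A : Type} [AddCommGroup A] [Fintype A] (f : A → ℂ)
    (hf : ∀ a b, f (a + b) = f a * f b) (hne : ∃ a, f a ≠ 1) :
    ∑ a, f a = 0 := by
  obtain ⟨a₀, ha₀⟩ := hne
  have key : f a₀ * ∑ a, f a = ∑ a, f a := by
    rw [Finset.mul_sum]
    exact Fintype.sum_equiv (Equiv.addLeft a₀) _ _ (fun a => by
      simp only [Equiv.coe_addLeft]; rw [hf])
  have h2 : (f a₀ - 1) * ∑ a, f a = 0 := by rw [sub_mul, key]; ring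
  rcases mul_eq_zero.1 h2 with h | h
  · exact absurd (by linear_combination h) ha₀
  · exact h

set_option maxHeartbeats 2000000 in
theorem stmt10 (r : ℕ)
    (R : Type) [CommRing R] [Fintype R] [CharP R 4]
    (hcard : Fintype.card R = 4 ^ r)
    (hlocal : ∀ x : R, ¬ IsUnit x ↔ x ∈ Ideal.span {(2 : R)})
    (ξ : R) (hξ : orderOf ξ = 2 ^ r - 1)
    (φ : R ≃+* R) (hφ : φ ξ = ξ ^ 2)
    (T : R → ZMod 4)
    (hT : ∀ x : R, (ZMod.castHom (dvd_refl 4) R) (T x) = ∑ i ∈ Finset.range r, (⇑φ)^[i] x)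
    (γ : R) (hγ : IsUnit γ) :
    ‖1 + ∑ k ∈ Finset.range (2 ^ r - 1), Complex.I ^ (T (γ * ξ ^ k)).val‖ ^ 2
        = 2 ^ r ∧
      (2 : ℝ) ^ ((r : ℝ) / 2) - 1
        ≤ ‖∑ k ∈ Finset.range (2 ^ r - 1), Complex.I ^ (T (γ * ξ ^ k)).val‖ ∧
      ‖∑ k ∈ Finset.range (2 ^ r - 1), Complex.I ^ (T (γ * ξ ^ k)).val‖
        ≤ (2 : ℝ) ^ ((r : ℝ) / 2) + 1 := by
  classical
  -- basic char facts
  have h4R : (4 : R) = 0 := by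
    have := CharP.cast_eq_zero R 4
    rwa [Nat.cast_ofNat] at this
  have h2ne : (2 : R) ≠ 0 := by
    intro h
    have h2 : ((2 : ℕ) : R) = 0 := by rwa [Nat.cast_ofNat]
    have := (CharP.cast_eq_zero_iff R 4 2).mp h2
    norm_num at this
  haveI : Nontrivial R := ⟨⟨2, 0, h2ne⟩⟩
  have hr1 : 1 ≤ r := by
    by_contra h
    have hr0 : r = 0 := by omega
    rw [hr0] at hcard
    have : Subsingleton R := Fintype.card_le_one_iff_subsingleton.mp (by omega)
    exact h2ne (Subsingleton.elim _ _)
  have hN : 0 < 2 ^ r - 1 := by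
    have : 2 ^ 1 ≤ 2 ^ r := Nat.pow_le_pow_right (by norm_num) hr1
    omega
  have hxipow : ξ ^ (2 ^ r - 1) = 1 := by rw [← hξ]; exact pow_orderOf_eq_one ξ
  have hxiu : IsUnit ξ := by
    refine IsUnit.of_mul_eq_one (a := ξ) (ξ ^ (2 ^ r - 2)) ?_
    rw [← pow_succ']
    rw [show 2 ^ r - 2 + 1 = 2 ^ r - 1 by omega]
    exact hxipow
  -- cast injectivity
  set cast4 : ZMod 4 →+* R := ZMod.castHom (dvd_refl 4) R with hcast4
  have hone : (1 : R) ≠ 0 := one_ne_zero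
  have hcast0 : ∀ c : ZMod 4, cast4 c = 0 → c = 0 := by
    intro c hc
    rcases aux_zmod4_cases c with rfl | rfl | rfl | rfl
    · rfl
    · rw [map_one] at hc; exact absurd hc hone
    · rw [map_ofNat] at hc; exact absurd hc h2ne
    · exfalso
      rw [map_ofNat] at hc
      have h1 : (1 : R) = 0 := by linear_combination h4R - hc
      exact hone h1
  have hcastinj : Function.Injective cast4 := by
    intro a b hab
    have : cast4 (a - b) = 0 := by rw [map_sub, hab, sub_self]
    have := hcast0 _ this
    linear_combination this
  -- iterate lemmas
  have hiter0 : ∀ i : ℕ, (⇑φ)^[i] (0 : R) = 0 := by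
    intro i
    induction i with
    | zero => rfl
    | succ n ih => rw [Function.iterate_succ_apply, map_zero]; exact ih
  have hiteradd : ∀ (i : ℕ) (x y : R), (⇑φ)^[i] (x + y) = (⇑φ)^[i] x + (⇑φ)^[i] y := by
    intro i
    induction i with
    | zero => intro x y; rfl
    | succ n ih => intro x y; rw [Function.iterate_succ_apply, map_add]; exact ih _ _
  have hiterneg : ∀ (i : ℕ) (x : R), (⇑φ)^[i] (-x) = -(⇑φ)^[i] x := by
    intro i x
    have := hiteradd i x (-x)
    rw [add_neg_cancel, hiter0] at this
    linear_combination -this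
  -- T lemmas
  have hTadd : ∀ x y : R, T (x + y) = T x + T y := by
    intro x y
    apply hcastinj
    rw [map_add, hT, hT, hT, ← Finset.sum_add_distrib]
    exact Finset.sum_congr rfl fun i _ => hiteradd i x y
  have hT0 : T 0 = 0 := by
    apply hcastinj
    rw [map_zero, hT]
    exact Finset.sum_eq_zero fun i _ => hiter0 i
  have hTneg : ∀ x : R, T (-x) = -T x := by
    intro x
    have := hTadd x (-x)
    rw [add_neg_cancel, hT0] at this
    linear_combination -this
  have hT2 : ∀ x : R, T (2 * x) = 2 * T x := by
    intro x
    have h := hTadd x x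
    have h2 : (2 : R) * x = x + x := by ring
    rw [h2, h]
    ring
  -- the character χ
  set χ : R → ℂ := fun x => Complex.I ^ (T x).val with hχ
  have hχadd : ∀ x y : R, χ (x + y) = χ x * χ y := by
    intro x y
    simp only [hχ]
    rw [hTadd, aux_I_val_add]
  have hχ0 : χ 0 = 1 := by simp only [hχ, hT0]; rfl
  have hχconj : ∀ x : R, (starRingEnd ℂ) (χ x) = χ (-x) := by
    intro x
    simp only [hχ]
    rw [aux_I_conj, hTneg]
  -- the quotient field
  set Icl : Ideal R := Ideal.span {(2 : R)} with hIcl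
  have hunit_of_not_mem : ∀ x : R, x ∉ Icl → IsUnit x := by
    intro x hx
    by_contra hu
    exact hx ((hlocal x).mp hu)
  have hnotunit_mem : ∀ x : R, x ∈ Icl → ¬ IsUnit x := by
    intro x hx hu
    exact ((hlocal x).mpr hx) hu
  have hmax : Icl.IsMaximal := by
    rw [Ideal.isMaximal_iff]
    constructor
    · intro h1
      exact hnotunit_mem 1 h1 isUnit_one
    · intro J x hIJ hxI hxJ
      obtain ⟨u, rfl⟩ := hunit_of_not_mem x hxI
      have : ((u⁻¹ : Rˣ) : R) * (u : R) ∈ J := J.mul_mem_left _ hxJ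
      rwa [Units.inv_mul] at this
  letI : Ideal.IsMaximal Icl := hmax
  letI F := R ⧸ Icl
  letI : Field F := Ideal.Quotient.field Icl
  letI : Fintype F := Fintype.ofFinite F
  set π : R →+* F := Ideal.Quotient.mk Icl with hπ
  have hπsurj : Function.Surjective π := Ideal.Quotient.mk_surjective
  have hker : ∀ x : R, π x = 0 ↔ x ∈ Icl := fun x => Ideal.Quotient.eq_zero_iff_mem
  have hπeq : ∀ x y : R, π x = π y ↔ x - y ∈ Icl := fun x y => Ideal.Quotient.eq
  have h2eq : ∀ x y : R, π x = π y → 2 * x = 2 * y := by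
    intro x y hxy
    obtain ⟨c, hc⟩ := Ideal.mem_span_singleton'.mp ((hπeq x y).mp hxy)
    linear_combination (-2 : R) * hc + c * h4R
  have hcharF : (2 : F) = 0 := by
    have : π 2 = 0 := (hker 2).mpr (Ideal.mem_span_singleton_self 2)
    rwa [map_ofNat] at this
  -- Teichmüller set
  set Tei : R → Prop := fun x => x = 0 ∨ ∃ k : ℕ, x = ξ ^ k with hTei
  have hTei0 : Tei 0 := Or.inl rfl
  have hTeipow : ∀ k : ℕ, Tei (ξ ^ k) := fun k => Or.inr ⟨k, rfl⟩
  have hTeimul : ∀ x y : R, Tei x → Tei y → Tei (x * y) := by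
    rintro x y (rfl | ⟨j, rfl⟩) hy
    · rw [zero_mul]; exact hTei0
    · rcases hy with rfl | ⟨k, rfl⟩
      · rw [mul_zero]; exact hTei0
      · rw [← pow_add]; exact hTeipow _
  -- powers of ξ are injective below the order
  have hpowinj : ∀ j k : ℕ, j < 2 ^ r - 1 → k < 2 ^ r - 1 → ξ ^ j = ξ ^ k → j = k := by
    have key : ∀ j k : ℕ, j ≤ k → k < 2 ^ r - 1 → ξ ^ j = ξ ^ k → j = k := by
      intro j k hjk hk he
      have h1 : ξ ^ j * ξ ^ (k - j) = ξ ^ j * 1 := by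
        rw [mul_one, ← pow_add, Nat.add_sub_cancel' hjk]
        exact he.symm
      have h2 : ξ ^ (k - j) = 1 := (hxiu.pow j).mul_left_cancel h1
      have h3 : (2 ^ r - 1) ∣ (k - j) := hξ ▸ orderOf_dvd_of_pow_eq_one h2
      rcases Nat.eq_zero_of_dvd_of_lt h3 (by omega) with h
      omega
    intro j k hj hk he
    rcases le_total j k with h | h
    · exact key j k h hk he
    · exact (key k j h hj he.symm).symm
  -- injectivity of π on Tei
  have hxiunit_pow : ∀ k : ℕ, IsUnit (ξ ^ k) := fun k => hxiu.pow k
  have hπpow_ne : ∀ k : ℕ, π (ξ ^ k) ≠ 0 := by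
    intro k h
    exact hnotunit_mem _ ((hker _).mp h) (hxiunit_pow k)
  have hodd : Odd (2 ^ r - 1) := by
    have : 2 ^ r = 2 * 2 ^ (r - 1) := by
      rw [← pow_succ']
      congr 1
      omega
    exact ⟨2 ^ (r - 1) - 1, by omega⟩
  have hπone : ∀ d : ℕ, π (ξ ^ d) = 1 → ξ ^ d = 1 := by
    intro d hd
    have h1 : ξ ^ d - 1 ∈ Icl := by
      rw [← hπeq]
      rw [hd, map_one]
    obtain ⟨c, hc⟩ := Ideal.mem_span_singleton'.mp h1
    have hsq : ξ ^ (2 * d) = 1 := by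
      have : ξ ^ (2 * d) = (ξ ^ d) ^ 2 := by rw [← pow_mul, mul_comm]
      rw [this, show ξ ^ d = 1 + c * 2 by linear_combination -hc]
      linear_combination (c * c + c) * h4R
    have hdvd : (2 ^ r - 1) ∣ 2 * d := hξ ▸ orderOf_dvd_of_pow_eq_one hsq
    have h2ndvd : ¬ (2 ∣ (2 ^ r - 1)) := by
      rcases hodd with ⟨m, hm⟩
      omega
    have hcop : Nat.Coprime (2 ^ r - 1) 2 :=
      Nat.coprime_comm.mp ((Nat.Prime.coprime_iff_not_dvd Nat.prime_two).mpr h2ndvd)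
    have : (2 ^ r - 1) ∣ d := (Nat.Coprime.dvd_of_dvd_mul_left hcop hdvd)
    obtain ⟨q, hq⟩ := this
    rw [hq, pow_mul, hxipow, one_pow]
  have hπinjTei : ∀ a : R, Tei a → ∀ b : R, Tei b → π a = π b → a = b := by
    rintro a (rfl | ⟨j, rfl⟩) b hb hab
    · rcases hb with rfl | ⟨k, rfl⟩
      · rfl
      · rw [map_zero] at hab
        exact absurd hab.symm (hπpow_ne k)
    · rcases hb with rfl | ⟨k, rfl⟩
      · rw [map_zero] at hab
        exact absurd hab (hπpow_ne j)
      · -- wlog j ≤ k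
        have key : ∀ j k : ℕ, j ≤ k → π (ξ ^ j) = π (ξ ^ k) → ξ ^ j = ξ ^ k := by
          intro j k hjk he
          have h1 : π (ξ ^ j) * π (ξ ^ (k - j)) = π (ξ ^ j) * 1 := by
            rw [mul_one, ← map_mul, ← pow_add, Nat.add_sub_cancel' hjk]
            exact he.symm
          have hu : IsUnit (π (ξ ^ j)) := (hxiunit_pow j).map π
          have h2 : π (ξ ^ (k - j)) = 1 := hu.mul_left_cancel h1
          have h3 : ξ ^ (k - j) = 1 := hπone _ h2
          have : ξ ^ k = ξ ^ j := by
            rw [← Nat.add_sub_cancel' hjk, pow_add, h3, mul_one]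
          exact this.symm
        rcases le_total j k with h | h
        · exact key j k h hab
        · exact (key k j h hab.symm).symm
  -- cardinality of F
  set σ : F → R := Function.surjInv hπsurj with hσ
  have hσspec : ∀ v : F, π (σ v) = v := fun v => Function.surjInv_eq hπsurj v
  have e2 : R ≃ (F × Icl) := by
    refine ⟨fun x => ⟨π x, ⟨x - σ (π x), ?_⟩⟩, fun p => σ p.1 + (p.2 : R), ?_, ?_⟩
    · rw [← hker, map_sub, hσspec, sub_self]
    · intro x
      simp
    · rintro ⟨v, y, hy⟩
      have hπy : π y = 0 := (hker y).mpr hy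
      have h1 : π (σ v + y) = v := by rw [map_add, hσspec, hπy, add_zero]
      simp only [h1]
      congr 1
      simp [h1]
  have h2cancel : ∀ x y : R, 2 * x = 2 * y → π x = π y := by
    intro x y hxy
    rw [hπeq]
    by_contra hmem
    obtain ⟨u, hu⟩ := hunit_of_not_mem _ hmem
    have h0 : (2 : R) * (x - y) = 0 := by linear_combination hxy
    have h2z : (2 : R) * (u : R) = 0 := by rw [hu]; exact h0
    have : (2 : R) = 0 := by
      have := congrArg (fun z => z * ((u⁻¹ : Rˣ) : R)) h2z
      simpa [mul_assoc, Units.mul_inv_cancel_right] using this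
    exact h2ne this
  have e3 : F ≃ Icl := by
    refine Equiv.ofBijective
      (fun v => ⟨2 * σ v, Ideal.mem_span_singleton'.mpr ⟨σ v, by ring⟩⟩) ⟨?_, ?_⟩
    · intro v w hvw
      have h1 : 2 * σ v = 2 * σ w := congrArg Subtype.val hvw
      have := h2cancel _ _ h1
      rwa [hσspec, hσspec] at this
    · rintro ⟨y, hy⟩
      obtain ⟨c, hc⟩ := Ideal.mem_span_singleton'.mp hy
      refine ⟨π c, ?_⟩
      have h1 : 2 * σ (π c) = 2 * c := h2eq _ _ (hσspec (π c))
      apply Subtype.ext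
      simp only [h1]
      linear_combination hc
  have hcardF : Fintype.card F = 2 ^ r := by
    have h1 : Nat.card R = Nat.card F * Nat.card Icl := by
      rw [Nat.card_congr e2, Nat.card_prod]
    have h2 : Nat.card Icl = Nat.card F := (Nat.card_congr e3).symm
    have h3 : Nat.card R = 4 ^ r := by rw [Nat.card_eq_fintype_card, hcard]
    have h4 : Nat.card F * Nat.card F = (2 ^ r) * (2 ^ r) := by
      have : Nat.card F * Nat.card F = 4 ^ r := by rw [← h3, h1, h2]
      rw [this, show (4 : ℕ) = 2 * 2 by norm_num, mul_pow]
    have h5 : Nat.card F = 2 ^ r := Nat.mul_self_inj.mp h4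
    rw [← Nat.card_eq_fintype_card, h5]
  -- the Teichmüller finset and surjectivity of π on it
  set Tfin : Finset R := insert 0 ((Finset.range (2 ^ r - 1)).image (ξ ^ ·)) with hTfin
  have hTfin_mem : ∀ x : R, Tei x → x ∈ Tfin := by
    rintro x (rfl | ⟨k, rfl⟩)
    · exact Finset.mem_insert_self 0 _
    · refine Finset.mem_insert_of_mem (Finset.mem_image.mpr ⟨k % (2 ^ r - 1), ?_, ?_⟩)
      · exact Finset.mem_range.mpr (Nat.mod_lt _ hN)
      · show ξ ^ (k % (2 ^ r - 1)) = ξ ^ k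
        conv_rhs => rw [← Nat.div_add_mod k (2 ^ r - 1)]
        rw [pow_add, pow_mul, hxipow, one_pow, one_mul]
  have hTfin_Tei : ∀ x : R, x ∈ Tfin → Tei x := by
    intro x hx
    rcases Finset.mem_insert.mp hx with rfl | hx
    · exact hTei0
    · obtain ⟨k, _, rfl⟩ := Finset.mem_image.mp hx
      exact hTeipow k
  have hTfin_card : Tfin.card = 2 ^ r := by
    rw [hTfin, Finset.card_insert_of_notMem, Finset.card_image_of_injOn, Finset.card_range]
    · omega
    · intro j hj k hk he
      exact hpowinj j k (Finset.mem_range.mp hj) (Finset.mem_range.mp hk) he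
    · intro h0
      obtain ⟨k, _, hk⟩ := Finset.mem_image.mp h0
      have : IsUnit (0 : R) := hk ▸ hxiunit_pow k
      exact (hnotunit_mem 0 Icl.zero_mem) this  -- 0 ∈ Icl
  have hπTfin_surj : ∀ α : F, ∃ a ∈ Tfin, π a = α := by
    have himg : Tfin.image π = Finset.univ := by
      apply Finset.eq_univ_of_card
      rw [Finset.card_image_of_injOn, hTfin_card, hcardF]
      intro a ha b hb hab
      exact hπinjTei a (hTfin_Tei a ha) b (hTfin_Tei b hb) hab
    intro α
    have : α ∈ Tfin.image π := by rw [himg]; exact Finset.mem_univ α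
    obtain ⟨a, ha, hπa⟩ := Finset.mem_image.mp this
    exact ⟨a, ha, hπa⟩
  -- the Teichmüller lift τ
  have hτex : ∀ α : F, ∃ a : R, Tei a ∧ π a = α := by
    intro α
    obtain ⟨a, ha, hπa⟩ := hπTfin_surj α
    exact ⟨a, hTfin_Tei a ha, hπa⟩
  choose τ hτTei hτπ using hτex
  have hτinv : ∀ a : R, Tei a → τ (π a) = a := by
    intro a ha
    exact hπinjTei _ (hτTei (π a)) _ ha (hτπ (π a))
  have hτ0 : τ 0 = 0 := by
    have := hτinv 0 hTei0
    rwa [map_zero] at this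
  have hτmul : ∀ α β : F, τ (α * β) = τ α * τ β := by
    intro α β
    apply hπinjTei _ (hτTei _) _ (hTeimul _ _ (hτTei α) (hτTei β))
    rw [map_mul, hτπ, hτπ, hτπ]
  -- square roots in F
  have hsqinj : Function.Injective (fun x : F => x ^ 2) := by
    intro x y hxy
    simp only at hxy
    have h1 : (x - y) ^ 2 = 0 := by
      linear_combination hxy + (y * y - x * y) * hcharF
    have h2 : x - y = 0 := by
      exact pow_eq_zero_iff (two_ne_zero) |>.mp h1
    linear_combination h2
  have hsqbij : Function.Bijective (fun x : F => x ^ 2) :=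
    Finite.injective_iff_bijective.mp hsqinj
  set sqE : F ≃ F := Equiv.ofBijective _ hsqbij with hsqE
  set rt : F → F := ⇑sqE.symm with hrt
  have hrt_sq : ∀ v : F, (rt v) ^ 2 = v := fun v => sqE.apply_symm_apply v
  have hsq_rt : ∀ v : F, rt (v ^ 2) = v := fun v => sqE.symm_apply_apply v
  have hrt0 : rt 0 = 0 := by
    have h00 : (0 : F) = 0 ^ 2 := (zero_pow two_ne_zero).symm
    nth_rewrite 1 [h00]
    rw [hsq_rt]
  have hrtmul : ∀ v w : F, rt (v * w) = rt v * rt w := by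
    intro v w
    have : v * w = (rt v * rt w) ^ 2 := by
      rw [mul_pow, hrt_sq, hrt_sq]
    rw [this, hsq_rt]
  have hrtbij : Function.Bijective rt := sqE.symm.bijective
  -- the τ addition formula
  have hτsq : ∀ v : F, τ (v ^ 2) = (τ v) ^ 2 := by
    intro v
    rw [sq, sq, hτmul]
  have hτadd : ∀ α β : F, τ (α + β) = τ α + τ β + 2 * τ (rt (α * β)) := by
    intro α β
    set s := rt α with hs
    set t := rt β with ht
    have hst : (s + t) ^ 2 = α + β := by
      have h1 : (s + t) ^ 2 = s ^ 2 + t ^ 2 + 2 * (s * t) := by ring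
      rw [h1, hs, ht, hrt_sq, hrt_sq, hcharF]
      ring
    have hC : π (τ (s + t)) = π (τ s + τ t) := by
      rw [map_add, hτπ, hτπ, hτπ]
    obtain ⟨z, hz⟩ := Ideal.mem_span_singleton'.mp ((hπeq _ _).mp hC)
    have hCeq : τ (s + t) = τ s + τ t + 2 * z := by linear_combination -hz
    have hsqC : τ (s + t) ^ 2 = τ s ^ 2 + τ t ^ 2 + 2 * (τ s * τ t) := by
      rw [hCeq]
      linear_combination (z * τ s + z * τ t + z * z) * h4R
    have h2 : τ (α + β) = τ (s + t) ^ 2 := by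
      rw [← hst, hτsq]
    rw [h2, hsqC, ← hτsq, ← hτsq, hrt_sq, hrt_sq, ← hτmul]
    have : s * t = rt (α * β) := by rw [hs, ht, ← hrtmul]
    rw [this]
  -- Frobenius on Teichmüller elements
  have hφTei : ∀ t : R, Tei t → φ t = t ^ 2 := by
    rintro t (rfl | ⟨k, rfl⟩)
    · rw [map_zero, zero_pow (two_ne_zero)]
    · rw [map_pow, hφ, ← pow_mul, ← pow_mul, mul_comm]
  have hTeisq : ∀ t : R, Tei t → Tei (t ^ 2) := by
    intro t ht
    rw [sq]
    exact hTeimul _ _ ht ht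
  have hφiter : ∀ i : ℕ, ∀ t : R, Tei t → (⇑φ)^[i] t = t ^ (2 ^ i) := by
    intro i
    induction i with
    | zero => intro t _; simp
    | succ n ih =>
      intro t ht
      rw [Function.iterate_succ_apply, hφTei t ht, ih _ (hTeisq t ht), ← pow_mul]
      congr 1
      rw [pow_succ]
      ring
  -- nontriviality of the trace
  have hx0 : ∃ x : R, (∑ i ∈ Finset.range r, (⇑φ)^[i] x) ∉ Icl := by
    by_contra hcon
    push_neg at hcon
    set P : Polynomial F := ∑ i ∈ Finset.range r, Polynomial.X ^ (2 ^ i) with hP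
    have hroot : ∀ α : F, Polynomial.eval α P = 0 := by
      intro α
      rw [hP, Polynomial.eval_finset_sum]
      have he : ∀ i ∈ Finset.range r,
          Polynomial.eval α ((Polynomial.X : Polynomial F) ^ (2 ^ i)) = π ((⇑φ)^[i] (τ α)) := by
        intro i _
        rw [Polynomial.eval_pow, Polynomial.eval_X, hφiter i _ (hτTei α), map_pow, hτπ]
      rw [Finset.sum_congr rfl he, ← map_sum, hker]
      exact hcon (τ α)
    have hPne : P ≠ 0 := by
      intro h0
      have hc : P.coeff (2 ^ (r - 1)) = 1 := by
        rw [hP, Polynomial.finset_sum_coeff]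
        have he : ∀ i ∈ Finset.range r,
            ((Polynomial.X : Polynomial F) ^ (2 ^ i)).coeff (2 ^ (r - 1))
              = if i = r - 1 then 1 else 0 := by
          intro i _
          rw [Polynomial.coeff_X_pow]
          have hiff : (2 ^ (r - 1) = 2 ^ i) ↔ (i = r - 1) := by
            constructor
            · intro h
              exact (Nat.pow_right_injective (le_refl 2) h).symm
            · intro h
              rw [h]
          exact if_congr hiff rfl rfl
        rw [Finset.sum_congr rfl he, Finset.sum_ite_eq' (Finset.range r) (r - 1) (fun _ => 1)]
        rw [if_pos (Finset.mem_range.mpr (by omega))]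
      rw [h0, Polynomial.coeff_zero] at hc
      exact zero_ne_one hc
    have hcard_le : Fintype.card F ≤ P.natDegree := by
      have hsub : (Finset.univ : Finset F) ⊆ P.roots.toFinset := by
        intro α _
        rw [Multiset.mem_toFinset, Polynomial.mem_roots']
        exact ⟨hPne, hroot α⟩
      calc Fintype.card F = (Finset.univ : Finset F).card := (Finset.card_univ).symm
        _ ≤ P.roots.toFinset.card := Finset.card_le_card hsub
        _ ≤ Multiset.card P.roots := Multiset.toFinset_card_le _
        _ ≤ P.natDegree := P.card_roots'
    have hdeg : P.natDegree ≤ 2 ^ (r - 1) := by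
      rw [hP]
      refine Polynomial.natDegree_sum_le_of_forall_le _ _ ?_
      intro i hi
      rw [Polynomial.natDegree_X_pow]
      exact Nat.pow_le_pow_right (by norm_num) (by
        have := Finset.mem_range.mp hi
        omega)
    rw [hcardF] at hcard_le
    have hlt : 2 ^ (r - 1) < 2 ^ r := Nat.pow_lt_pow_right one_lt_two (by omega)
    omega
  -- the additive character Ψ on F
  set Ψ : F → ℂ := fun v => χ (2 * (γ * τ v)) with hΨ
  have hΨadd : ∀ v w : F, Ψ (v + w) = Ψ v * Ψ w := by
    intro v w
    have h1 : 2 * (γ * τ (v + w)) = 2 * (γ * τ v) + 2 * (γ * τ w) := by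
      rw [hτadd]
      linear_combination (γ * τ (rt (v * w))) * h4R
    show χ (2 * (γ * τ (v + w))) = χ (2 * (γ * τ v)) * χ (2 * (γ * τ w))
    rw [h1, hχadd]
  have hΨ0 : Ψ 0 = 1 := by
    show χ (2 * (γ * τ 0)) = 1
    rw [hτ0, mul_zero, mul_zero, hχ0]
  have hΨne : ∃ v : F, Ψ v ≠ 1 := by
    obtain ⟨x₀, hx₀⟩ := hx0
    have hodd4 : T x₀ = 1 ∨ T x₀ = 3 := by
      rcases aux_zmod4_cases (T x₀) with h | h | h | h
      · exfalso; apply hx₀; rw [← hT, h, map_zero]; exact Icl.zero_mem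
      · exact Or.inl h
      · exfalso; apply hx₀; rw [← hT, h, map_ofNat]
        exact Ideal.mem_span_singleton_self 2
      · exact Or.inr h
    set g := hγ.unit with hg
    have hγg : γ * ((↑g⁻¹ : R)) = 1 := by
      rw [← IsUnit.unit_spec hγ]
      exact Units.mul_inv _
    set v₀ : F := π ((↑g⁻¹ : R) * x₀) with hv₀
    have hπγτ : π (γ * τ v₀) = π x₀ := by
      have hx : γ * ((↑g⁻¹ : R) * x₀) = x₀ := by rw [← mul_assoc, hγg, one_mul]
      rw [map_mul, hτπ, hv₀, ← map_mul, hx]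
    have h2γτ : 2 * (γ * τ v₀) = 2 * x₀ := h2eq _ _ hπγτ
    refine ⟨v₀, ?_⟩
    show χ (2 * (γ * τ v₀)) ≠ 1
    rw [h2γτ]
    have hT2x : T (2 * x₀) = 2 := by
      rw [hT2]
      rcases hodd4 with h | h <;> rw [h] <;> decide
    show Complex.I ^ (T (2 * x₀)).val ≠ 1
    rw [hT2x, show ((2 : ZMod 4)).val = 2 from rfl, Complex.I_sq]
    intro hcon
    have := congrArg Complex.re hcon
    norm_num at this
  have hΨsum : ∑ v : F, Ψ v = 0 := aux_char_sum Ψ hΨadd hΨne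
  -- the main sums
  set Z : ℂ := ∑ k ∈ Finset.range (2 ^ r - 1), Complex.I ^ (T (γ * ξ ^ k)).val with hZ
  set S : ℂ := ∑ α : F, χ (γ * τ α) with hS
  have h0notmem : (0 : R) ∉ (Finset.range (2 ^ r - 1)).image (ξ ^ ·) := by
    intro h0
    obtain ⟨k, _, hk⟩ := Finset.mem_image.mp h0
    have : IsUnit (0 : R) := hk ▸ hxiunit_pow k
    exact (hnotunit_mem 0 Icl.zero_mem) this
  have hSze : S = 1 + Z := by
    have h1 : S = ∑ a ∈ Tfin, χ (γ * a) := by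
      rw [hS]
      refine Finset.sum_nbij' (i := fun α => τ α) (j := fun a => π a) ?_ ?_ ?_ ?_ ?_
      · intro α _
        exact hTfin_mem _ (hτTei α)
      · intro a _
        exact Finset.mem_univ _
      · intro α _
        exact hτπ α
      · intro a ha
        exact hτinv a (hTfin_Tei a ha)
      · intro α _
        rfl
    have h2 : ∑ a ∈ Tfin, χ (γ * a)
        = χ (γ * 0) + ∑ a ∈ (Finset.range (2 ^ r - 1)).image (ξ ^ ·), χ (γ * a) := by
      rw [hTfin]
      exact Finset.sum_insert h0notmem
    have h3 : ∑ a ∈ (Finset.range (2 ^ r - 1)).image (ξ ^ ·), χ (γ * a)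
        = ∑ k ∈ Finset.range (2 ^ r - 1), χ (γ * ξ ^ k) := by
      refine Finset.sum_image ?_
      intro j hj k hk he
      exact hpowinj j k (Finset.mem_range.mp hj) (Finset.mem_range.mp hk) he
    rw [h1, h2, h3, mul_zero, hχ0, hZ]
  have hterm : ∀ α β : F, χ (γ * τ α) * χ (-(γ * τ β)) = χ (γ * τ α - γ * τ β) := by
    intro α β
    rw [← hχadd]
    congr 1
    ring
  have hconjS : (starRingEnd ℂ) S = ∑ β : F, χ (-(γ * τ β)) := by
    rw [hS, map_sum]
    exact Finset.sum_congr rfl fun β _ => hχconj _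
  have hpoint : ∀ u β : F, χ (γ * τ (u + β) - γ * τ β) = χ (γ * τ u) * Ψ (rt (u * β)) := by
    intro u β
    have h1 : γ * τ (u + β) - γ * τ β = γ * τ u + 2 * (γ * τ (rt (u * β))) := by
      linear_combination γ * (hτadd u β)
    rw [h1, hχadd]
  have hinner : ∀ u : F, (∑ β : F, Ψ (rt (u * β))) = if u = 0 then ((2 : ℂ) ^ r) else 0 := by
    intro u
    by_cases hu : u = 0
    · rw [if_pos hu, hu]
      have : ∀ β : F, Ψ (rt ((0 : F) * β)) = 1 := by
        intro β
        rw [zero_mul, hrt0, hΨ0]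
      rw [Finset.sum_congr rfl (fun β _ => this β)]
      rw [Finset.sum_const, Finset.card_univ, hcardF, nsmul_eq_mul, mul_one]
      push_cast
      ring
    · rw [if_neg hu]
      set e : F ≃ F := (Equiv.mulLeft₀ u hu).trans sqE.symm with he
      have hcomm : ∀ β : F, Ψ (rt (u * β)) = Ψ (e β) := fun β => rfl
      rw [Finset.sum_congr rfl (fun β _ => hcomm β)]
      rw [Fintype.sum_equiv e _ Ψ (fun β => rfl)]
      exact hΨsum
  have hSS : S * (starRingEnd ℂ) S = (2 : ℂ) ^ r := by
    rw [hconjS, hS, Finset.sum_mul_sum]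
    calc ∑ α : F, ∑ β : F, χ (γ * τ α) * χ (-(γ * τ β))
        = ∑ β : F, ∑ α : F, χ (γ * τ α - γ * τ β) := by
          rw [Finset.sum_comm]
          exact Finset.sum_congr rfl fun β _ => Finset.sum_congr rfl fun α _ => hterm α β
      _ = ∑ β : F, ∑ u : F, χ (γ * τ (u + β) - γ * τ β) := by
          refine Finset.sum_congr rfl fun β _ => ?_
          exact (Fintype.sum_equiv (Equiv.addRight β)
            (fun u => χ (γ * τ (u + β) - γ * τ β))
            (fun α => χ (γ * τ α - γ * τ β)) (fun u => rfl)).symm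
      _ = ∑ u : F, ∑ β : F, χ (γ * τ u) * Ψ (rt (u * β)) := by
          rw [Finset.sum_comm]
          exact Finset.sum_congr rfl fun β _ => Finset.sum_congr rfl fun u _ => hpoint β u
      _ = ∑ u : F, χ (γ * τ u) * ∑ β : F, Ψ (rt (u * β)) := by
          exact Finset.sum_congr rfl fun u _ => (Finset.mul_sum _ _ _).symm
      _ = ∑ u : F, χ (γ * τ u) * (if u = 0 then ((2 : ℂ) ^ r) else 0) := by
          exact Finset.sum_congr rfl fun u _ => by rw [hinner u]
      _ = (2 : ℂ) ^ r := by
          rw [Finset.sum_eq_single_of_mem (0 : F) (Finset.mem_univ 0)]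
          · rw [if_pos rfl, hτ0, mul_zero, hχ0, one_mul]
          · intro u _ hu
            rw [if_neg hu, mul_zero]
  -- conclusion
  have hnormSq : Complex.normSq S = (2 : ℝ) ^ r := by
    have h1 := Complex.mul_conj S
    rw [hSS] at h1
    have h2 : ((Complex.normSq S : ℝ) : ℂ) = (((2 : ℝ) ^ r : ℝ) : ℂ) := by
      rw [← h1]
      push_cast
      ring
    exact_mod_cast h2
  have habs2 : ‖S‖ ^ 2 = (2 : ℝ) ^ r := by
    rw [Complex.sq_norm, hnormSq]
  set c : ℝ := (2 : ℝ) ^ ((r : ℝ) / 2) with hc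
  have hc0 : 0 ≤ c := Real.rpow_nonneg (by norm_num) _
  have hc2 : c ^ 2 = (2 : ℝ) ^ r := by
    rw [sq, hc, ← Real.rpow_add (by norm_num : (0 : ℝ) < 2)]
    rw [show (r : ℝ) / 2 + (r : ℝ) / 2 = (r : ℝ) by ring]
    exact Real.rpow_natCast 2 r
  have habsS : ‖S‖ = c := by
    have h1 : ‖S‖ ^ 2 = c ^ 2 := by rw [habs2, hc2]
    have h2 : 0 ≤ ‖S‖ := norm_nonneg _
    nlinarith [h1, h2, hc0]
  have habs1Z : ‖1 + Z‖ = c := by rw [← hSze]; exact habsS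
  refine ⟨?_, ?_, ?_⟩
  · rw [← hSze]
    rw [habs2]
  · have htri : ‖1 + Z‖ ≤ ‖(1 : ℂ)‖ + ‖Z‖ :=
      norm_add_le 1 Z
    rw [habs1Z, norm_one] at htri
    linarith
  · have hZeq : Z = (1 + Z) + (-1) := by ring
    have htri : ‖(1 + Z) + (-1)‖ ≤ ‖1 + Z‖ + ‖(-1 : ℂ)‖ :=
      norm_add_le _ _
    have hm1 : ‖(-1 : ℂ)‖ = 1 := by rw [norm_neg, norm_one]
    rw [habs1Z, hm1] at htri
    calc ‖Z‖ = ‖(1 + Z) + (-1)‖ := by rw [← hZeq]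
      _ ≤ c + 1 := htri
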